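/- Let ℓ be a prime, m a natural number, G a cyclic group of order ℓ^m, and V, W two finite-dimensional representations of G over ℚ_ℓ. If dim_{ℚ_ℓ} V^H = dim_{ℚ_ℓ} W^H for every subgroup H of G (where V^H denotes the subspace of H-fixed vectors), then V and W are isomorphic as ℚ_ℓ-representations of G. -/

import Mathlib

open Polynomial Module

section Irred

variable (ℓ : ℕ) [hℓ : Fact ℓ.Prime]

/-- The `ℓ^i`-th cyclotomic polynomial is irreducible over `ℚ_ℓ`. -/
lemma cyclotomic_prime_pow_irreducible_padic (i : ℕ) :
    Irreducible (cyclotomic (ℓ ^ i) ℚ_[ℓ]) := by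
  cases i with
  | zero =>
      rw [pow_zero, cyclotomic_one]
      simpa using irreducible_X_sub_C (1 : ℚ_[ℓ])
  | succ n =>
      have hprime : Prime (ℓ : ℤ_[ℓ]) := PadicInt.prime_p
      set P : Ideal ℤ_[ℓ] := Ideal.span {(ℓ : ℤ_[ℓ])} with hP
      have hPprime : P.IsPrime := (Ideal.span_singleton_prime hprime.ne_zero).mpr hprime
      have hZ := cyclotomic_prime_pow_comp_X_add_one_isEisensteinAt ℓ n
      rw [show (X + 1 : ℤ[X]) = X + C 1 from by rw [C_1]] at hZ
      set f : ℤ_[ℓ][X] := cyclotomic (ℓ ^ (n + 1)) ℤ_[ℓ] with hf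
      have hfcomp : f.comp (X + C 1)
          = ((cyclotomic (ℓ ^ (n + 1)) ℤ).comp (X + C 1)).map (Int.castRingHom ℤ_[ℓ]) := by
        rw [Polynomial.map_comp, map_cyclotomic]
        simp [hf]
      have hZmonic : ((cyclotomic (ℓ ^ (n + 1)) ℤ).comp (X + C 1)).Monic :=
        (cyclotomic.monic _ ℤ).comp_X_add_C 1
      have hmonic : (f.comp (X + C 1)).Monic := (cyclotomic.monic _ ℤ_[ℓ]).comp_X_add_C 1
      have hdeg : (f.comp (X + C 1)).natDegree
          = ((cyclotomic (ℓ ^ (n + 1)) ℤ).comp (X + C 1)).natDegree := by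
        rw [hfcomp, hZmonic.natDegree_map]
      have hnotunit : ¬ IsUnit (ℓ : ℤ_[ℓ]) := hprime.not_unit
      have hEis : (f.comp (X + C 1)).IsEisensteinAt P := by
        constructor
        · rw [hmonic.leadingCoeff, hP, Ideal.mem_span_singleton]
          intro hdvd
          exact hnotunit (isUnit_of_dvd_one hdvd)
        · intro k hk
          rw [hdeg] at hk
          have hmem := hZ.mem hk
          rw [Ideal.submodule_span_eq, Ideal.mem_span_singleton] at hmem
          rw [hfcomp, coeff_map, hP, Ideal.mem_span_singleton]
          obtain ⟨c, hc⟩ := hmem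
          refine ⟨(c : ℤ_[ℓ]), ?_⟩
          rw [hc]
          simp
        · have hc0 : ((cyclotomic (ℓ ^ (n + 1)) ℤ).comp (X + C 1)).coeff 0 = (ℓ : ℤ) := by
            rw [coeff_zero_eq_eval_zero, eval_comp]
            simp only [eval_add, eval_X, eval_C, zero_add]
            exact eval_one_cyclotomic_prime_pow n
          rw [hfcomp, coeff_map, hc0, hP, Ideal.span_singleton_pow, Ideal.mem_span_singleton]
          intro hdvd
          obtain ⟨c, hc⟩ := hdvd
          rw [map_natCast] at hc
          have hc' : (ℓ : ℤ_[ℓ]) * ((ℓ : ℤ_[ℓ]) * c) = (ℓ : ℤ_[ℓ]) * 1 := by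
            rw [mul_one, show (ℓ : ℤ_[ℓ]) * ((ℓ : ℤ_[ℓ]) * c) = (ℓ : ℤ_[ℓ]) ^ 2 * c from by ring,
              ← hc]
          have := mul_left_cancel₀ hprime.ne_zero hc'
          exact hnotunit (isUnit_iff_exists_inv.mpr ⟨_, this⟩)
      have hdegpos : 0 < (f.comp (X + C 1)).natDegree := by
        rw [natDegree_comp, natDegree_X_add_C, mul_one, hf, natDegree_cyclotomic]
        exact Nat.totient_pos.mpr (pow_pos hℓ.out.pos _)
      have hirr_comp : Irreducible (f.comp (X + C 1)) :=
        hEis.irreducible hPprime hmonic.isPrimitive hdegpos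
      have hirrZ : Irreducible f := by
        have happ : (algEquivAevalXAddC (1 : ℤ_[ℓ])) f = f.comp (X + C 1) := rfl
        rw [← MulEquiv.irreducible_iff (algEquivAevalXAddC (1 : ℤ_[ℓ])).toMulEquiv]
        simpa [happ] using hirr_comp
      have := ((cyclotomic.monic (ℓ ^ (n + 1)) ℤ_[ℓ]).irreducible_iff_irreducible_map_fraction_map
        (K := ℚ_[ℓ])).mp hirrZ
      rwa [map_cyclotomic] at this

end Irred

section LinAlg

variable {k : Type} [Field k] {V W : Type} [AddCommGroup V] [Module k V]
  [AddCommGroup W] [Module k W]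

/-- `A` preserves the kernel of any polynomial in `A`. -/
lemma aeval_ker_mem (A : Module.End k V) (p : k[X]) {v : V}
    (hv : v ∈ LinearMap.ker (aeval A p)) : A v ∈ LinearMap.ker (aeval A p) := by
  rw [LinearMap.mem_ker] at hv ⊢
  have hcomm : aeval A p * A = A * aeval A p := by
    have h1 : aeval A p * aeval A (X : k[X]) = aeval A (X : k[X]) * aeval A p := by
      rw [← map_mul, ← map_mul, mul_comm]
    rwa [aeval_X (R := k)] at h1
  calc (aeval A p) (A v) = (aeval A p * A) v := rfl
    _ = (A * aeval A p) v := by rw [hcomm]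
    _ = A ((aeval A p) v) := rfl
    _ = 0 := by rw [hv, map_zero]

lemma aeval_restrict_apply (A : Module.End k V) {S : Submodule k V}
    (hS : ∀ v ∈ S, A v ∈ S) (p : k[X]) (v : S) :
    ((aeval (A.restrict hS) p) v : V) = aeval A p (v : V) := by
  induction p using Polynomial.induction_on' with
  | add p q hp hq => simp only [map_add, LinearMap.add_apply, Submodule.coe_add, hp, hq]
  | monomial n a =>
      have hpow : (((A.restrict hS ^ n) v : S) : V) = (A ^ n) (v : V) := by
        rw [Module.End.pow_restrict, LinearMap.restrict_apply]
      simp [aeval_monomial, Module.End.mul_apply, Module.algebraMap_end_apply, hpow]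

/-- There is an intertwining linear equivalence between submodules `S` and `T`. -/
def Good (A : Module.End k V) (B : Module.End k W) (S : Submodule k V) (T : Submodule k W) :
    Prop :=
  ∃ e : S ≃ₗ[k] T, ∀ (v : V) (hv : v ∈ S) (hAv : A v ∈ S),
    (↑(e ⟨A v, hAv⟩) : W) = B ↑(e ⟨v, hv⟩)

lemma good_piece [FiniteDimensional k V] [FiniteDimensional k W]
    (A : Module.End k V) (B : Module.End k W) {π : k[X]} (hπ : Irreducible π)
    (h : finrank k (LinearMap.ker (aeval A π)) = finrank k (LinearMap.ker (aeval B π))) :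
    Good A B (LinearMap.ker (aeval A π)) (LinearMap.ker (aeval B π)) := by
  classical
  letI := Fact.mk hπ
  set Xs := LinearMap.ker (aeval A π) with hX
  set Ys := LinearMap.ker (aeval B π) with hY
  have hAX : ∀ v ∈ Xs, A v ∈ Xs := fun v hv => aeval_ker_mem A π hv
  have hBY : ∀ v ∈ Ys, B v ∈ Ys := fun v hv => aeval_ker_mem B π hv
  set A' : Module.End k ↥Xs := A.restrict hAX with hA'
  set B' : Module.End k ↥Ys := B.restrict hBY with hB'
  have hA'0 : aeval A' π = 0 := by
    apply LinearMap.ext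
    intro v
    apply Subtype.ext
    rw [LinearMap.zero_apply, aeval_restrict_apply A hAX π v]
    simpa using v.2
  have hB'0 : aeval B' π = 0 := by
    apply LinearMap.ext
    intro v
    apply Subtype.ext
    rw [LinearMap.zero_apply, aeval_restrict_apply B hBY π v]
    simpa using v.2
  set K := AdjoinRoot π with hK
  have hAkill : ∀ a ∈ Ideal.span {π}, (aeval A').toRingHom a = 0 := by
    intro a ha
    rw [Ideal.mem_span_singleton] at ha
    obtain ⟨c, rfl⟩ := ha
    show aeval A' (π * c) = 0
    rw [map_mul, hA'0, zero_mul]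
  have hBkill : ∀ a ∈ Ideal.span {π}, (aeval B').toRingHom a = 0 := by
    intro a ha
    rw [Ideal.mem_span_singleton] at ha
    obtain ⟨c, rfl⟩ := ha
    show aeval B' (π * c) = 0
    rw [map_mul, hB'0, zero_mul]
  set φ : K →+* Module.End k ↥Xs :=
    Ideal.Quotient.lift (Ideal.span {π}) (aeval A').toRingHom hAkill with hφ
  set ψ : K →+* Module.End k ↥Ys :=
    Ideal.Quotient.lift (Ideal.span {π}) (aeval B').toRingHom hBkill with hψ
  have hφmk : ∀ a : k[X], φ (AdjoinRoot.mk π a) = aeval A' a := fun a =>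
    Ideal.Quotient.lift_mk _ _ _
  have hψmk : ∀ a : k[X], ψ (AdjoinRoot.mk π a) = aeval B' a := fun a =>
    Ideal.Quotient.lift_mk _ _ _
  have hφalg : ∀ c : k, φ (algebraMap k K c) = algebraMap k (Module.End k ↥Xs) c := by
    intro c
    rw [AdjoinRoot.algebraMap_eq]
    rw [show AdjoinRoot.of π c = AdjoinRoot.mk π (C c) from rfl, hφmk, aeval_C]
  have hψalg : ∀ c : k, ψ (algebraMap k K c) = algebraMap k (Module.End k ↥Ys) c := by
    intro c
    rw [AdjoinRoot.algebraMap_eq]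
    rw [show AdjoinRoot.of π c = AdjoinRoot.mk π (C c) from rfl, hψmk, aeval_C]
  letI instKX : Module K ↥Xs := Module.compHom _ φ
  letI instKY : Module K ↥Ys := Module.compHom _ ψ
  have hsmulX : ∀ (z : K) (v : ↥Xs), z • v = φ z v := fun _ _ => rfl
  have hsmulY : ∀ (z : K) (v : ↥Ys), z • v = ψ z v := fun _ _ => rfl
  letI towerX : IsScalarTower k K ↥Xs := by
    constructor
    intro c z v
    rw [hsmulX, hsmulX, Algebra.smul_def, map_mul, Module.End.mul_apply, hφalg,
      Module.algebraMap_end_apply]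
  letI towerY : IsScalarTower k K ↥Ys := by
    constructor
    intro c z v
    rw [hsmulY, hsmulY, Algebra.smul_def, map_mul, Module.End.mul_apply, hψalg,
      Module.algebraMap_end_apply]
  haveI hKfin : Module.Finite k K := (AdjoinRoot.powerBasis hπ.ne_zero).finite
  haveI : Module.Finite K ↥Xs := Module.Finite.right k K ↥Xs
  haveI : Module.Finite K ↥Ys := Module.Finite.right k K ↥Ys
  have hfr : finrank K ↥Xs = finrank K ↥Ys := by
    have h1 : finrank k K * finrank K ↥Xs = finrank k ↥Xs := Module.finrank_mul_finrank k K ↥Xs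
    have h2 : finrank k K * finrank K ↥Ys = finrank k ↥Ys := Module.finrank_mul_finrank k K ↥Ys
    have hpos : 0 < finrank k K := finrank_pos
    exact Nat.eq_of_mul_eq_mul_left hpos (by rw [h1, h2]; exact h)
  let e0 : ↥Xs ≃ₗ[K] ↥Ys := LinearEquiv.ofFinrankEq _ _ hfr
  refine ⟨e0.restrictScalars k, ?_⟩
  intro v hv hAv
  have hroot : ∀ u : ↥Xs, (AdjoinRoot.root π) • u = A' u := by
    intro u
    rw [hsmulX, show AdjoinRoot.root π = AdjoinRoot.mk π X from rfl, hφmk, aeval_X]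
  have hrootY : ∀ u : ↥Ys, (AdjoinRoot.root π) • u = B' u := by
    intro u
    rw [hsmulY, show AdjoinRoot.root π = AdjoinRoot.mk π X from rfl, hψmk, aeval_X]
  have key : e0 (A' ⟨v, hv⟩) = B' (e0 ⟨v, hv⟩) := by
    rw [← hroot, ← hrootY, map_smul]
  have hA'app : A' ⟨v, hv⟩ = ⟨A v, hAv⟩ := rfl
  have hfin : ((e0 ⟨A v, hAv⟩ : ↥Ys) : W) = ((B' (e0 ⟨v, hv⟩) : ↥Ys) : W) := by
    rw [← hA'app, key]
  simpa [hB', LinearMap.restrict_apply] using hfin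

lemma good_glue [FiniteDimensional k V] [FiniteDimensional k W]
    (A : Module.End k V) (B : Module.End k W) {p q : k[X]} (hpq : IsCoprime p q)
    (h1 : Good A B (LinearMap.ker (aeval A p)) (LinearMap.ker (aeval B p)))
    (h2 : Good A B (LinearMap.ker (aeval A q)) (LinearMap.ker (aeval B q))) :
    Good A B (LinearMap.ker (aeval A (p * q))) (LinearMap.ker (aeval B (p * q)))  := by
  classical
  obtain ⟨e1, he1⟩ := h1
  obtain ⟨e2, he2⟩ := h2
  have hleVp : LinearMap.ker (aeval A p) ≤ LinearMap.ker (aeval A (p * q)) :=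
    le_trans le_sup_left Polynomial.sup_ker_aeval_le_ker_aeval_mul
  have hleVq : LinearMap.ker (aeval A q) ≤ LinearMap.ker (aeval A (p * q)) :=
    le_trans le_sup_right Polynomial.sup_ker_aeval_le_ker_aeval_mul
  have hleWp : LinearMap.ker (aeval B p) ≤ LinearMap.ker (aeval B (p * q)) :=
    le_trans le_sup_left Polynomial.sup_ker_aeval_le_ker_aeval_mul
  have hleWq : LinearMap.ker (aeval B q) ≤ LinearMap.ker (aeval B (p * q)) :=
    le_trans le_sup_right Polynomial.sup_ker_aeval_le_ker_aeval_mul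
  set ΦV0 : (↥(LinearMap.ker (aeval A p)) × ↥(LinearMap.ker (aeval A q))) →ₗ[k]
      ↥(LinearMap.ker (aeval A (p * q))) :=
    LinearMap.coprod (Submodule.inclusion hleVp) (Submodule.inclusion hleVq) with hΦV0
  set ΦW0 : (↥(LinearMap.ker (aeval B p)) × ↥(LinearMap.ker (aeval B q))) →ₗ[k]
      ↥(LinearMap.ker (aeval B (p * q))) :=
    LinearMap.coprod (Submodule.inclusion hleWp) (Submodule.inclusion hleWq) with hΦW0
  have happV : ∀ a, ((ΦV0 a : ↥(LinearMap.ker (aeval A (p * q)))) : V) = (a.1 : V) + (a.2 : V) := by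
    rintro ⟨a1, a2⟩
    simp [hΦV0]
  have happW : ∀ a, ((ΦW0 a : ↥(LinearMap.ker (aeval B (p * q)))) : W) = (a.1 : W) + (a.2 : W) := by
    rintro ⟨a1, a2⟩
    simp [hΦW0]
  have hbijV : Function.Bijective ΦV0 := by
    constructor
    · rw [← LinearMap.ker_eq_bot, LinearMap.ker_eq_bot']
      rintro ⟨x, y⟩ hxy
      have hxy' : (x : V) + (y : V) = 0 := by
        have := congrArg (Subtype.val) hxy
        rwa [happV (x, y)] at this
      have hxmem : (x : V) ∈ LinearMap.ker (aeval A p) ⊓ LinearMap.ker (aeval A q) := by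
        refine ⟨x.2, ?_⟩
        rw [show (x : V) = -(y : V) from eq_neg_of_add_eq_zero_left hxy']
        exact neg_mem y.2
      rw [disjoint_iff.mp (Polynomial.disjoint_ker_aeval_of_isCoprime A hpq)] at hxmem
      have hx0 : (x : V) = 0 := hxmem
      have hy0 : (y : V) = 0 := by rwa [hx0, zero_add] at hxy'
      exact Prod.ext (Subtype.ext hx0) (Subtype.ext hy0)
    · rintro ⟨v, hv⟩
      rw [← Polynomial.sup_ker_aeval_eq_ker_aeval_mul_of_coprime A hpq] at hv
      obtain ⟨x, hx, y, hy, hxy⟩ := Submodule.mem_sup.mp hv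
      refine ⟨(⟨x, hx⟩, ⟨y, hy⟩), Subtype.ext ?_⟩
      rw [happV]
      exact hxy
  have hbijW : Function.Bijective ΦW0 := by
    constructor
    · rw [← LinearMap.ker_eq_bot, LinearMap.ker_eq_bot']
      rintro ⟨x, y⟩ hxy
      have hxy' : (x : W) + (y : W) = 0 := by
        have := congrArg (Subtype.val) hxy
        rwa [happW (x, y)] at this
      have hxmem : (x : W) ∈ LinearMap.ker (aeval B p) ⊓ LinearMap.ker (aeval B q) := by
        refine ⟨x.2, ?_⟩
        rw [show (x : W) = -(y : W) from eq_neg_of_add_eq_zero_left hxy']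
        exact neg_mem y.2
      rw [disjoint_iff.mp (Polynomial.disjoint_ker_aeval_of_isCoprime B hpq)] at hxmem
      have hx0 : (x : W) = 0 := hxmem
      have hy0 : (y : W) = 0 := by rwa [hx0, zero_add] at hxy'
      exact Prod.ext (Subtype.ext hx0) (Subtype.ext hy0)
    · rintro ⟨v, hv⟩
      rw [← Polynomial.sup_ker_aeval_eq_ker_aeval_mul_of_coprime B hpq] at hv
      obtain ⟨x, hx, y, hy, hxy⟩ := Submodule.mem_sup.mp hv
      refine ⟨(⟨x, hx⟩, ⟨y, hy⟩), Subtype.ext ?_⟩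
      rw [happW]
      exact hxy
  set ΦV := LinearEquiv.ofBijective ΦV0 hbijV with hΦV
  set ΦW := LinearEquiv.ofBijective ΦW0 hbijW with hΦW
  refine ⟨ΦV.symm.trans ((e1.prodCongr e2).trans ΦW), ?_⟩
  intro v hv hAv
  set x := (ΦV.symm ⟨v, hv⟩).1 with hxdef
  set y := (ΦV.symm ⟨v, hv⟩).2 with hydef
  have hΦVapp : ∀ a, ((ΦV a : ↥(LinearMap.ker (aeval A (p * q)))) : V) = (a.1 : V) + (a.2 : V) :=
    fun a => happV a
  have hveq : (x : V) + (y : V) = v := by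
    have h2 : ((ΦV (ΦV.symm ⟨v, hv⟩) : ↥(LinearMap.ker (aeval A (p * q)))) : V) = v := by
      rw [ΦV.apply_symm_apply]
    rw [show ΦV.symm ⟨v, hv⟩ = (x, y) from rfl] at h2
    rw [← h2, hΦVapp (x, y)]
  have hAx : A (x : V) ∈ LinearMap.ker (aeval A p) := aeval_ker_mem A p x.2
  have hAy : A (y : V) ∈ LinearMap.ker (aeval A q) := aeval_ker_mem A q y.2
  have hsymmA : ΦV.symm ⟨A v, hAv⟩ = (⟨A (x : V), hAx⟩, ⟨A (y : V), hAy⟩) := by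
    rw [LinearEquiv.symm_apply_eq]
    refine Subtype.ext ?_
    rw [hΦVapp]
    simp only
    rw [← map_add, hveq]
  have lhs : (↑((ΦV.symm.trans ((e1.prodCongr e2).trans ΦW)) ⟨A v, hAv⟩) : W)
      = (↑(e1 ⟨A (x : V), hAx⟩) : W) + (↑(e2 ⟨A (y : V), hAy⟩) : W) := by
    rw [LinearEquiv.trans_apply, LinearEquiv.trans_apply, hsymmA, LinearEquiv.prodCongr_apply]
    exact happW _
  have rhs : (↑((ΦV.symm.trans ((e1.prodCongr e2).trans ΦW)) ⟨v, hv⟩) : W)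
      = (↑(e1 x) : W) + (↑(e2 y) : W) := by
    rw [LinearEquiv.trans_apply, LinearEquiv.trans_apply,
      show ΦV.symm ⟨v, hv⟩ = (x, y) from rfl, LinearEquiv.prodCongr_apply]
    exact happW _
  rw [lhs, rhs, he1 (x : V) x.2 hAx, he2 (y : V) y.2 hAy, ← map_add]

lemma good_top (A : Module.End k V) (B : Module.End k W)
    (h : Good A B (⊤ : Submodule k V) (⊤ : Submodule k W)) :
    ∃ e : V ≃ₗ[k] W, ∀ v, e (A v) = B (e v) := by
  obtain ⟨e0, he0⟩ := h
  refine ⟨Submodule.topEquiv.symm.trans (e0.trans Submodule.topEquiv), fun v => ?_⟩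
  exact he0 v trivial trivial

end LinAlg

section Fixed

variable {k G V : Type} [CommRing k] [Group G] [AddCommGroup V] [Module k V]

lemma mem_fixedSubspace_iff (ρ : Representation k G V) (H : Subgroup G) (v : V) :
    v ∈ (⨅ h ∈ H, LinearMap.ker (ρ h - LinearMap.id)) ↔ ∀ x ∈ H, ρ x v = v := by
  simp [Submodule.mem_iInf, LinearMap.mem_ker, LinearMap.sub_apply, sub_eq_zero]

lemma fixedSubspace_zpowers (ρ : Representation k G V) (h : G) :
    (⨅ x ∈ Subgroup.zpowers h, LinearMap.ker (ρ x - LinearMap.id))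
      = LinearMap.ker (ρ h - LinearMap.id) := by
  apply le_antisymm
  · intro v hv
    have := (mem_fixedSubspace_iff ρ _ v).mp hv h (Subgroup.mem_zpowers h)
    simp only [LinearMap.mem_ker, LinearMap.sub_apply, LinearMap.id_apply, sub_eq_zero]
    exact this
  · intro v hv
    have hfix : ρ h v = v := by
      have := hv
      simp only [LinearMap.mem_ker, LinearMap.sub_apply, LinearMap.id_apply, sub_eq_zero] at this
      exact this
    rw [mem_fixedSubspace_iff]
    intro x hx
    rw [Subgroup.zpowers_eq_closure] at hx
    induction hx using Subgroup.closure_induction with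
    | mem z hz =>
        rw [Set.mem_singleton_iff] at hz
        subst hz
        exact hfix
    | one => simp
    | mul a b _ _ ha hb => rw [map_mul, Module.End.mul_apply, hb, ha]
    | inv a _ ha =>
        have h2 : ρ a⁻¹ (ρ a v) = ρ a⁻¹ v := by rw [ha]
        rw [← Module.End.mul_apply, ← map_mul, inv_mul_cancel, map_one,
          Module.End.one_apply] at h2
        exact h2.symm

end Fixed

/-- The subspace `V^H` of `H`-fixed vectors of a representation. -/
noncomputable abbrev fixedSubspace {k G V : Type} [CommRing k] [Group G]
    [AddCommGroup V] [Module k V] (ρ : Representation k G V) (H : Subgroup G) :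
    Submodule k V :=
  ⨅ h ∈ H, LinearMap.ker (ρ h - LinearMap.id)

/-- Let `G` be a cyclic group of order `ℓ^m` and `V`, `W` two
finite-dimensional `ℚ_ℓ`-representations of `G`.  If `dim V^H = dim W^H` for every
subgroup `H` of `G`, then `V ≅ W` as `ℚ_ℓ`-representations of `G`. -/
theorem stmt13 (ℓ : ℕ) [Fact ℓ.Prime] (m : ℕ)
    (G : Type) [Group G] [IsCyclic G] (hcard : Nat.card G = ℓ ^ m)
    (V W : Type) [AddCommGroup V] [Module ℚ_[ℓ] V] [FiniteDimensional ℚ_[ℓ] V]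
    [AddCommGroup W] [Module ℚ_[ℓ] W] [FiniteDimensional ℚ_[ℓ] W]
    (ρV : Representation ℚ_[ℓ] G V) (ρW : Representation ℚ_[ℓ] G W)
    (hdim : ∀ H : Subgroup G,
      Module.finrank ℚ_[ℓ] ↥(fixedSubspace ρV H) =
        Module.finrank ℚ_[ℓ] ↥(fixedSubspace ρW H)) :
    ∃ e : V ≃ₗ[ℚ_[ℓ]] W, ∀ (g : G) (v : V), e (ρV g v) = ρW g (e v) := by
  have hp : ℓ.Prime := Fact.out
  haveI : Finite G := Nat.finite_of_card_ne_zero (by rw [hcard]; exact pow_ne_zero m hp.ne_zero)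
  obtain ⟨g, hg⟩ := IsCyclic.exists_generator (α := G)
  have horder : orderOf g = ℓ ^ m := by
    rw [orderOf_eq_card_of_forall_mem_zpowers hg, hcard]
  set A : Module.End ℚ_[ℓ] V := ρV g with hA
  set B : Module.End ℚ_[ℓ] W := ρW g with hB
  have hApow : ∀ j : ℕ,
      aeval A ((X : ℚ_[ℓ][X]) ^ (ℓ ^ j) - 1) = ρV (g ^ (ℓ ^ j)) - LinearMap.id := by
    intro j
    rw [map_sub, aeval_X_pow, map_one, map_pow, hA, Module.End.one_eq_id]
  have hBpow : ∀ j : ℕ,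
      aeval B ((X : ℚ_[ℓ][X]) ^ (ℓ ^ j) - 1) = ρW (g ^ (ℓ ^ j)) - LinearMap.id := by
    intro j
    rw [map_sub, aeval_X_pow, map_one, map_pow, hB, Module.End.one_eq_id]
  have hdims : ∀ j : ℕ,
      finrank ℚ_[ℓ] ↥(LinearMap.ker (aeval A ((X : ℚ_[ℓ][X]) ^ (ℓ ^ j) - 1)))
        = finrank ℚ_[ℓ] ↥(LinearMap.ker (aeval B ((X : ℚ_[ℓ][X]) ^ (ℓ ^ j) - 1))) := by
    intro j
    have h := hdim (Subgroup.zpowers (g ^ (ℓ ^ j)))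
    rw [show fixedSubspace ρV (Subgroup.zpowers (g ^ (ℓ ^ j)))
        = LinearMap.ker (ρV (g ^ (ℓ ^ j)) - LinearMap.id) from fixedSubspace_zpowers ρV _,
      show fixedSubspace ρW (Subgroup.zpowers (g ^ (ℓ ^ j)))
        = LinearMap.ker (ρW (g ^ (ℓ ^ j)) - LinearMap.id) from fixedSubspace_zpowers ρW _] at h
    rw [hApow j, hBpow j]
    exact h
  -- cyclotomic facts
  have hprod : ∀ j : ℕ, cyclotomic (ℓ ^ (j + 1)) ℚ_[ℓ] * ((X : ℚ_[ℓ][X]) ^ (ℓ ^ j) - 1)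
      = (X : ℚ_[ℓ][X]) ^ (ℓ ^ (j + 1)) - 1 := fun j =>
    cyclotomic_prime_pow_mul_X_pow_sub_one ℚ_[ℓ] ℓ j
  have hsep : ∀ j : ℕ, ((X : ℚ_[ℓ][X]) ^ (ℓ ^ j) - 1).Separable := by
    intro j
    have hne : ((ℓ ^ j : ℕ) : ℚ_[ℓ]) ≠ 0 := by
      exact_mod_cast pow_ne_zero j (by exact_mod_cast hp.ne_zero)
    have := separable_X_pow_sub_C (1 : ℚ_[ℓ]) hne one_ne_zero
    rwa [map_one] at this
  have hcop : ∀ j : ℕ,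
      IsCoprime (cyclotomic (ℓ ^ (j + 1)) ℚ_[ℓ]) ((X : ℚ_[ℓ][X]) ^ (ℓ ^ j) - 1) := by
    intro j
    refine Polynomial.Separable.isCoprime ?_
    rw [hprod j]
    exact hsep (j + 1)
  -- dimensions of cyclotomic kernels agree
  have hdimΦ : ∀ i : ℕ,
      finrank ℚ_[ℓ] ↥(LinearMap.ker (aeval A (cyclotomic (ℓ ^ i) ℚ_[ℓ])))
        = finrank ℚ_[ℓ] ↥(LinearMap.ker (aeval B (cyclotomic (ℓ ^ i) ℚ_[ℓ]))) := by
    intro i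
    cases i with
    | zero =>
        have h0 : ((X : ℚ_[ℓ][X]) ^ (ℓ ^ 0) - 1) = cyclotomic (ℓ ^ 0) ℚ_[ℓ] := by
          rw [pow_zero, pow_one, cyclotomic_one]
        rw [← h0]
        exact hdims 0
    | succ i =>
        have hsumV : finrank ℚ_[ℓ]
              ↥(LinearMap.ker (aeval A ((X : ℚ_[ℓ][X]) ^ (ℓ ^ (i + 1)) - 1)))
            = finrank ℚ_[ℓ] ↥(LinearMap.ker (aeval A (cyclotomic (ℓ ^ (i + 1)) ℚ_[ℓ])))
              + finrank ℚ_[ℓ] ↥(LinearMap.ker (aeval A ((X : ℚ_[ℓ][X]) ^ (ℓ ^ i) - 1))) := by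
          rw [← hprod i, ← Polynomial.sup_ker_aeval_eq_ker_aeval_mul_of_coprime A (hcop i)]
          have hfr := Submodule.finrank_sup_add_finrank_inf_eq
            (LinearMap.ker (aeval A (cyclotomic (ℓ ^ (i + 1)) ℚ_[ℓ])))
            (LinearMap.ker (aeval A ((X : ℚ_[ℓ][X]) ^ (ℓ ^ i) - 1)))
          rw [disjoint_iff.mp (Polynomial.disjoint_ker_aeval_of_isCoprime A (hcop i)),
            finrank_bot, add_zero] at hfr
          exact hfr
        have hsumW : finrank ℚ_[ℓ]
              ↥(LinearMap.ker (aeval B ((X : ℚ_[ℓ][X]) ^ (ℓ ^ (i + 1)) - 1)))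
            = finrank ℚ_[ℓ] ↥(LinearMap.ker (aeval B (cyclotomic (ℓ ^ (i + 1)) ℚ_[ℓ])))
              + finrank ℚ_[ℓ] ↥(LinearMap.ker (aeval B ((X : ℚ_[ℓ][X]) ^ (ℓ ^ i) - 1))) := by
          rw [← hprod i, ← Polynomial.sup_ker_aeval_eq_ker_aeval_mul_of_coprime B (hcop i)]
          have hfr := Submodule.finrank_sup_add_finrank_inf_eq
            (LinearMap.ker (aeval B (cyclotomic (ℓ ^ (i + 1)) ℚ_[ℓ])))
            (LinearMap.ker (aeval B ((X : ℚ_[ℓ][X]) ^ (ℓ ^ i) - 1)))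
          rw [disjoint_iff.mp (Polynomial.disjoint_ker_aeval_of_isCoprime B (hcop i)),
            finrank_bot, add_zero] at hfr
          exact hfr
        have h1 := hdims (i + 1)
        have h2 := hdims i
        omega
  -- inductive construction of intertwining equivalences
  have hgood : ∀ j : ℕ,
      Good A B (LinearMap.ker (aeval A ((X : ℚ_[ℓ][X]) ^ (ℓ ^ j) - 1)))
        (LinearMap.ker (aeval B ((X : ℚ_[ℓ][X]) ^ (ℓ ^ j) - 1))) := by
    intro j
    induction j with
    | zero =>
        have h0 : ((X : ℚ_[ℓ][X]) ^ (ℓ ^ 0) - 1) = cyclotomic (ℓ ^ 0) ℚ_[ℓ] := by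
          rw [pow_zero, pow_one, cyclotomic_one]
        rw [h0]
        exact good_piece A B (cyclotomic_prime_pow_irreducible_padic ℓ 0) (hdimΦ 0)
    | succ i ih =>
        rw [← hprod i]
        exact good_glue A B (hcop i)
          (good_piece A B (cyclotomic_prime_pow_irreducible_padic ℓ (i + 1)) (hdimΦ (i + 1))) ih
  have hg1 : g ^ (ℓ ^ m) = 1 := by
    rw [← horder]
    exact pow_orderOf_eq_one g
  have htopV : LinearMap.ker (aeval A ((X : ℚ_[ℓ][X]) ^ (ℓ ^ m) - 1)) = ⊤ := by
    rw [hApow m, hg1, map_one]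
    have : (1 : Module.End ℚ_[ℓ] V) - LinearMap.id = 0 := by
      rw [Module.End.one_eq_id, sub_self]
    rw [this, LinearMap.ker_zero]
  have htopW : LinearMap.ker (aeval B ((X : ℚ_[ℓ][X]) ^ (ℓ ^ m) - 1)) = ⊤ := by
    rw [hBpow m, hg1, map_one]
    have : (1 : Module.End ℚ_[ℓ] W) - LinearMap.id = 0 := by
      rw [Module.End.one_eq_id, sub_self]
    rw [this, LinearMap.ker_zero]
  have hgm := hgood m
  rw [htopV, htopW] at hgm
  obtain ⟨e, he⟩ := good_top A B hgm
  refine ⟨e, ?_⟩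
  intro x v
  have hx : x ∈ Subgroup.zpowers g := hg x
  rw [Subgroup.zpowers_eq_closure] at hx
  induction hx using Subgroup.closure_induction generalizing v with
  | mem z hz =>
      rw [Set.mem_singleton_iff] at hz
      subst hz
      exact he v
  | one => simp
  | mul a b _ _ ha hb =>
      rw [map_mul, map_mul, Module.End.mul_apply, Module.End.mul_apply, ha, hb]
  | inv a _ ha =>
      have h2 : e (ρV a (ρV a⁻¹ v)) = ρW a (e (ρV a⁻¹ v)) := ha (ρV a⁻¹ v)
      rw [← Module.End.mul_apply, ← map_mul, mul_inv_cancel, map_one,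
        Module.End.one_apply] at h2
      rw [h2, ← Module.End.mul_apply, ← map_mul, inv_mul_cancel, map_one, Module.End.one_apply]
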